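/- Let 𝐀 ⊆ ℝ^{m×n} be an interval matrix and 𝐛 ⊆ ℝᵐ, 𝐜 ⊆ ℝⁿ interval vectors. The worst optimal value f̄ (supremum over all scenarios of the scenario's optimal value, in the extended reals with +∞ for infeasible scenarios) of the interval linear program min c⊤x subject to Ax ≤ b (with A ∈ 𝐀, b ∈ 𝐛, c ∈ 𝐜) is equal to the worst optimal value of the transformed interval linear program min c₁⊤x⁺ − c₂⊤x⁻ subject to A₁x⁺ − A₂x⁻ ≤ b, x⁺ ≥ 0, x⁻ ≥ 0, where A₁, A₂ ∈ 𝐀 and c₁, c₂ ∈ 𝐜 are chosen independently and b ∈ 𝐛. -/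

import Mathlib

open Matrix

/-- Entrywise order on real matrices. -/
def matLE {m n : ℕ} (A B : Matrix (Fin m) (Fin n) ℝ) : Prop := ∀ i j, A i j ≤ B i j

set_option linter.unusedSectionVars false


section FarkasCone

variable {ι : Type*} [Fintype ι]

/-- Membership in the conical hull of a list of vectors, defined recursively. -/
def InCone : List (ι → ℝ) → (ι → ℝ) → Prop
  | [], b => b = 0
  | a :: L, b => ∃ μ : ℝ, 0 ≤ μ ∧ InCone L (b - μ • a)

theorem inCone_zero (L : List (ι → ℝ)) : InCone L 0 := by
  induction L with
  | nil => rfl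
  | cons a L ih => exact ⟨0, le_rfl, by simpa using ih⟩

theorem InCone.dot_nonneg {L : List (ι → ℝ)} {b : ι → ℝ} (h : InCone L b) (y : ι → ℝ)
    (hy : ∀ a ∈ L, 0 ≤ a ⬝ᵥ y) : 0 ≤ b ⬝ᵥ y := by
  induction L generalizing b with
  | nil => simp [InCone] at h; simp [h]
  | cons a L ih =>
    obtain ⟨μ, hμ, hr⟩ := h
    have h1 := ih hr (fun v hv => hy v (List.mem_cons_of_mem _ hv))
    have h2 : 0 ≤ a ⬝ᵥ y := hy a List.mem_cons_self
    have : (b - μ • a) ⬝ᵥ y = b ⬝ᵥ y - μ * (a ⬝ᵥ y) := by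
      simp [sub_dotProduct, smul_dotProduct]
    nlinarith [this ▸ h1]

theorem InCone.add {L : List (ι → ℝ)} {b₁ b₂ : ι → ℝ} (h₁ : InCone L b₁) (h₂ : InCone L b₂) :
    InCone L (b₁ + b₂) := by
  induction L generalizing b₁ b₂ with
  | nil => simp_all [InCone]
  | cons a L ih =>
    obtain ⟨μ₁, hμ₁, hr₁⟩ := h₁
    obtain ⟨μ₂, hμ₂, hr₂⟩ := h₂
    refine ⟨μ₁ + μ₂, by linarith, ?_⟩
    have : b₁ + b₂ - (μ₁ + μ₂) • a = (b₁ - μ₁ • a) + (b₂ - μ₂ • a) := by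
      module
    rw [this]; exact ih hr₁ hr₂

theorem inCone_smul_mem {L : List (ι → ℝ)} {a : ι → ℝ} (ha : a ∈ L) {t : ℝ} (ht : 0 ≤ t) :
    InCone L (t • a) := by
  induction L with
  | nil => simp at ha
  | cons v L ih =>
    rcases List.mem_cons.1 ha with h | h
    · exact ⟨t, ht, by simp [h]; exact inCone_zero L⟩
    · exact ⟨0, le_rfl, by simpa using ih h⟩

theorem InCone.elim {L : List (ι → ℝ)} {b : ι → ℝ} (h : InCone L b) (S : Set (ι → ℝ))
    (h0 : (0 : ι → ℝ) ∈ S)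
    (hstep : ∀ a ∈ L, ∀ μ : ℝ, 0 ≤ μ → ∀ x ∈ S, x + μ • a ∈ S) : b ∈ S := by
  induction L generalizing b with
  | nil => exact (show b = 0 from h) ▸ h0
  | cons a L ih =>
    obtain ⟨μ, hμ, hr⟩ := h
    have := ih hr (fun v hv => hstep v (List.mem_cons_of_mem _ hv))
    have h2 := hstep a List.mem_cons_self μ hμ _ this
    simpa using h2

theorem inCone_of_map {L : List (ι → ℝ)} {a b : ι → ℝ} {φ : (ι → ℝ) → ℝ}
    (h : InCone (L.map fun v => v - φ v • a) b) : ∃ μ : ℝ, InCone L (b + μ • a) := by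
  induction L generalizing b with
  | nil => exact ⟨0, by simpa [InCone] using h⟩
  | cons v L ih =>
    obtain ⟨t, ht, hr⟩ := h
    obtain ⟨μ, hμ⟩ := ih hr
    refine ⟨t * φ v + μ, t, ht, ?_⟩
    have : b + (t * φ v + μ) • a - t • v = b - t • (v - φ v • a) + μ • a := by module
    rw [this]; exact hμ

theorem farkas_cone (L : List (ι → ℝ)) (b : ι → ℝ) :
    InCone L b ∨ ∃ y : ι → ℝ, (∀ a ∈ L, 0 ≤ a ⬝ᵥ y) ∧ b ⬝ᵥ y < 0 := by
  suffices H : ∀ (N : ℕ) (L : List (ι → ℝ)), L.length = N → ∀ b,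
      InCone L b ∨ ∃ y : ι → ℝ, (∀ a ∈ L, 0 ≤ a ⬝ᵥ y) ∧ b ⬝ᵥ y < 0 from H _ L rfl b
  intro N
  induction N with
  | zero =>
    intro L hL b
    rw [List.length_eq_zero_iff] at hL
    subst hL
    by_cases hb : b = 0
    · exact Or.inl hb
    · refine Or.inr ⟨-b, by simp, ?_⟩
      have : 0 < b ⬝ᵥ b := lt_of_le_of_ne (Finset.sum_nonneg fun i _ => mul_self_nonneg (b i)) (fun h => hb (dotProduct_self_eq_zero.1 h.symm))
      simpa [dotProduct_neg] using neg_neg_iff_pos.2 this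
  | succ N ih =>
    intro L hL b
    match L, hL with
    | a :: L₂, hL =>
    have hL₂ : L₂.length = N := by simpa using hL
    rcases ih L₂ hL₂ b with h | ⟨y, hy, hby⟩
    · exact Or.inl ⟨0, le_rfl, by simpa using h⟩
    by_cases ha : 0 ≤ a ⬝ᵥ y
    · refine Or.inr ⟨y, ?_, hby⟩
      intro v hv
      rcases List.mem_cons.1 hv with rfl | hv
      · exact ha
      · exact hy v hv
    push_neg at ha
    have hane : a ⬝ᵥ y ≠ 0 := ne_of_lt ha
    set φ : (ι → ℝ) → ℝ := fun v => (v ⬝ᵥ y) / (a ⬝ᵥ y) with hφ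
    set L' := L₂.map fun v => v - φ v • a with hL'
    have hL'len : L'.length = N := by simp [hL', hL₂]
    rcases ih L' hL'len (b - φ b • a) with h | ⟨z, hz, hbz⟩
    · -- reconstruct cone membership
      obtain ⟨μ, hμ⟩ := inCone_of_map h
      have hdot : 0 ≤ (b - φ b • a + μ • a) ⬝ᵥ y := hμ.dot_nonneg y hy
      have hsum : (b - φ b • a + μ • a) ⬝ᵥ y = b ⬝ᵥ y - φ b * (a ⬝ᵥ y) + μ * (a ⬝ᵥ y) := by
        simp [sub_dotProduct, add_dotProduct, smul_dotProduct]
      have hφb : φ b * (a ⬝ᵥ y) = b ⬝ᵥ y := by simp only [hφ]; field_simp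
      rw [hsum, hφb] at hdot
      have hμle : φ b - μ ≥ 0 := by nlinarith
      refine Or.inl ⟨φ b - μ, hμle, ?_⟩
      have : b - (φ b - μ) • a = b - φ b • a + μ • a := by module
      rw [this]; exact hμ
    · -- build new certificate
      refine Or.inr ⟨z - ((a ⬝ᵥ z) / (a ⬝ᵥ y)) • y, ?_, ?_⟩
      · intro v hv
        rcases List.mem_cons.1 hv with rfl | hv
        · have : v ⬝ᵥ (z - ((v ⬝ᵥ z) / (v ⬝ᵥ y)) • y) = 0 := by
            simp [dotProduct_sub, dotProduct_smul]
            field_simp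
            ring
          rw [this]
        · have h1 : 0 ≤ (v - φ v • a) ⬝ᵥ z := hz _ (List.mem_map_of_mem hv)
          have : v ⬝ᵥ (z - ((a ⬝ᵥ z) / (a ⬝ᵥ y)) • y) = (v - φ v • a) ⬝ᵥ z := by
            simp [dotProduct_sub, dotProduct_smul, sub_dotProduct, smul_dotProduct, hφ]
            rw [dotProduct_comm a z, dotProduct_comm v y]
            field_simp
          rw [this]; exact h1
      · have : b ⬝ᵥ (z - ((a ⬝ᵥ z) / (a ⬝ᵥ y)) • y) = (b - φ b • a) ⬝ᵥ z := by
          simp [dotProduct_sub, dotProduct_smul, sub_dotProduct, smul_dotProduct, hφ]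
          rw [dotProduct_comm a z, dotProduct_comm b y]
          field_simp
        rw [this]; exact hbz

end FarkasCone


/-- Farkas lemma: an infeasible system `N x ≤ d` has a certificate of infeasibility. -/
theorem farkas_matrix {κ ι : Type*} [Fintype κ] [Fintype ι] [DecidableEq κ] [DecidableEq ι]
    (N : Matrix κ ι ℝ) (d : κ → ℝ) (h : ¬ ∃ x : ι → ℝ, N.mulVec x ≤ d) :
    ∃ y : κ → ℝ, 0 ≤ y ∧ (∀ j, ∑ i, y i * N i j = 0) ∧ d ⬝ᵥ y < 0 := by
  classical
  set col : ι → (κ → ℝ) := fun j => fun i => N i j with hcol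
  set L : List (κ → ℝ) :=
    (Finset.univ.toList.map col) ++ (Finset.univ.toList.map fun j => -col j) ++
      (Finset.univ.toList.map fun r : κ => (Pi.single r 1 : κ → ℝ)) with hLdef
  rcases farkas_cone L d with hmem | ⟨y, hy, hdy⟩
  · exfalso
    apply h
    have : d ∈ {d' : κ → ℝ | ∃ x : ι → ℝ, N.mulVec x ≤ d'} := by
      refine hmem.elim _ ⟨0, by simp [Matrix.mulVec_zero]⟩ ?_
      rintro a ha μ hμ d' ⟨x, hx⟩
      simp only [hLdef, List.mem_append, List.mem_map, Finset.mem_toList] at ha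
      rcases ha with (⟨j, _, rfl⟩ | ⟨j, _, rfl⟩) | ⟨r, _, rfl⟩
      · refine ⟨x + μ • (Pi.single j 1 : ι → ℝ), ?_⟩
        intro i
        have : N.mulVec (x + μ • (Pi.single j 1 : ι → ℝ)) = N.mulVec x + μ • col j := by
          rw [Matrix.mulVec_add, Matrix.mulVec_smul, Matrix.mulVec_single]
          simp [hcol]
          rfl
        rw [this]
        exact add_le_add (hx i) le_rfl
      · refine ⟨x - μ • (Pi.single j 1 : ι → ℝ), ?_⟩
        intro i
        have : N.mulVec (x - μ • (Pi.single j 1 : ι → ℝ)) = N.mulVec x - μ • col j := by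
          rw [Matrix.mulVec_sub, Matrix.mulVec_smul, Matrix.mulVec_single]
          simp [hcol]
          rfl
        rw [this]
        have := hx i
        simp only [Pi.add_apply, Pi.sub_apply, Pi.smul_apply, Pi.neg_apply, smul_eq_mul,
          mul_neg] at *
        linarith
      · refine ⟨x, ?_⟩
        intro i
        have := hx i
        have h2 : 0 ≤ (μ • (Pi.single r 1 : κ → ℝ)) i := by
          by_cases hir : i = r
          · subst hir; simp [hμ]
          · simp [Pi.single_eq_of_ne hir]
        simp only [Pi.add_apply] at *
        linarith
    exact this
  · refine ⟨y, ?_, ?_, hdy⟩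
    · intro r
      have := hy (Pi.single r 1) (by
        simp only [hLdef, List.mem_append, List.mem_map, Finset.mem_toList]
        exact Or.inr ⟨r, Finset.mem_univ r, rfl⟩)
      simpa [single_dotProduct] using this
    · intro j
      have h1 := hy (col j) (by
        simp only [hLdef, List.mem_append, List.mem_map, Finset.mem_toList]
        exact Or.inl (Or.inl ⟨j, Finset.mem_univ j, rfl⟩))
      have h2 := hy (-col j) (by
        simp only [hLdef, List.mem_append, List.mem_map, Finset.mem_toList]
        exact Or.inl (Or.inr ⟨j, Finset.mem_univ j, rfl⟩))
      have heq : col j ⬝ᵥ y = ∑ i, y i * N i j := by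
        simp [dotProduct, hcol, mul_comm]
      rw [neg_dotProduct] at h2
      linarith [heq ▸ h1, heq ▸ h2]

theorem exists_scenario (m n : ℕ) (Al Au : Matrix (Fin m) (Fin n) ℝ)
    (bl : Fin m → ℝ) (cl cu : Fin n → ℝ)
    (hA : matLE Al Au) (hc : cl ≤ cu) (r : ℝ)
    (hinf : ¬ ∃ p : (Fin n → ℝ) × (Fin n → ℝ),
      Au.mulVec p.1 - Al.mulVec p.2 ≤ bl ∧ 0 ≤ p.1 ∧ 0 ≤ p.2 ∧ cu ⬝ᵥ p.1 - cl ⬝ᵥ p.2 ≤ r) :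
    ∃ (A : Matrix (Fin m) (Fin n) ℝ) (c : Fin n → ℝ),
      matLE Al A ∧ matLE A Au ∧ cl ≤ c ∧ c ≤ cu ∧
      ∀ x : Fin n → ℝ, A.mulVec x ≤ bl → r < c ⬝ᵥ x := by
  classical
  set N : Matrix (Fin m ⊕ ((Fin n ⊕ Fin n) ⊕ Unit)) (Fin n ⊕ Fin n) ℝ :=
    Sum.elim (fun i => Sum.elim (Au i) (fun j => -Al i j))
      (Sum.elim (fun q t => -(if t = q then (1:ℝ) else 0))
        (fun _ => Sum.elim cu (fun j => -cl j))) with hN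
  set d : Fin m ⊕ ((Fin n ⊕ Fin n) ⊕ Unit) → ℝ :=
    Sum.elim bl (Sum.elim (fun _ => 0) (fun _ => r)) with hd
  have hNrow : ∀ (x : Fin n ⊕ Fin n → ℝ) (s), N.mulVec x s =
      Sum.elim (fun i => Au.mulVec (x ∘ Sum.inl) i - Al.mulVec (x ∘ Sum.inr) i)
        (Sum.elim (fun q => -(x q)) (fun _ => cu ⬝ᵥ (x ∘ Sum.inl) - cl ⬝ᵥ (x ∘ Sum.inr))) s := by
    intro x s
    rcases s with i | q | u
    · simp only [hN, Matrix.mulVec, dotProduct, Fintype.sum_sum_type, Sum.elim_inl,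
        Sum.elim_inr, Function.comp_apply, neg_mul]
      rw [Finset.sum_neg_distrib, ← sub_eq_add_neg]
    · simp only [hN, Matrix.mulVec, dotProduct, Sum.elim_inl, Sum.elim_inr, neg_mul]
      rw [Finset.sum_neg_distrib, neg_inj]
      simp [ite_mul]
    · simp only [hN, Matrix.mulVec, dotProduct, Fintype.sum_sum_type, Sum.elim_inl,
        Sum.elim_inr, Function.comp_apply, neg_mul]
      rw [Finset.sum_neg_distrib, ← sub_eq_add_neg]
  have hNinf : ¬ ∃ x : Fin n ⊕ Fin n → ℝ, N.mulVec x ≤ d := by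
    rintro ⟨x, hx⟩
    apply hinf
    refine ⟨(x ∘ Sum.inl, x ∘ Sum.inr), fun i => ?_, fun j => ?_, fun j => ?_, ?_⟩
    · have := hx (Sum.inl i); rwa [hNrow] at this
    · have := hx (Sum.inr (Sum.inl (Sum.inl j))); rw [hNrow] at this
      simpa [hd] using this
    · have := hx (Sum.inr (Sum.inl (Sum.inr j))); rw [hNrow] at this
      simpa [hd] using this
    · have := hx (Sum.inr (Sum.inr ())); rwa [hNrow] at this
  obtain ⟨y, hy0, hcols, hdy⟩ := farkas_matrix N d hNinf
  set Y : Fin m → ℝ := fun i => y (Sum.inl i) with hYdef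
  set z : Fin n ⊕ Fin n → ℝ := fun q => y (Sum.inr (Sum.inl q)) with hzdef
  set lam : ℝ := y (Sum.inr (Sum.inr ())) with hlamdef
  have hY0 : ∀ i, 0 ≤ Y i := fun i => hy0 _
  have hlam0 : 0 ≤ lam := hy0 _
  have hz0 : ∀ q, 0 ≤ z q := fun q => hy0 _
  have hhi : ∀ j, ∑ i, Y i * Au i j + lam * cu j = z (Sum.inl j) := by
    intro j
    have h1 := hcols (Sum.inl j)
    rw [Fintype.sum_sum_type, Fintype.sum_sum_type] at h1
    simp only [hN, Sum.elim_inl, Sum.elim_inr, mul_neg, mul_ite, mul_one, mul_zero,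
      Finset.sum_neg_distrib, Finset.sum_ite_eq, Finset.mem_univ, if_true,
      Fintype.univ_unit, Finset.sum_singleton] at h1
    linarith [h1]
  have hlo : ∀ j, ∑ i, Y i * Al i j + lam * cl j = -z (Sum.inr j) := by
    intro j
    have h1 := hcols (Sum.inr j)
    rw [Fintype.sum_sum_type, Fintype.sum_sum_type] at h1
    simp only [hN, Sum.elim_inl, Sum.elim_inr, mul_neg, mul_ite, mul_one, mul_zero,
      Finset.sum_neg_distrib, Finset.sum_ite_eq, Finset.mem_univ, if_true,
      Fintype.univ_unit, Finset.sum_singleton] at h1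
    linarith [h1]
  have hbl : ∑ i, Y i * bl i + r * lam < 0 := by
    rw [dotProduct, Fintype.sum_sum_type, Fintype.sum_sum_type] at hdy
    simp only [hd, Sum.elim_inl, Sum.elim_inr, zero_mul, Finset.sum_const_zero,
      Fintype.univ_unit, Finset.sum_singleton] at hdy
    have : ∑ i, Y i * bl i = ∑ i, bl i * Y i := Finset.sum_congr rfl fun i _ => mul_comm _ _
    linarith [hdy]
  -- interpolation coefficients
  set lo : Fin n → ℝ := fun j => ∑ i, Y i * Al i j + lam * cl j with hlodef
  set hi : Fin n → ℝ := fun j => ∑ i, Y i * Au i j + lam * cu j with hhidef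
  have hlo0 : ∀ j, lo j ≤ 0 := fun j => by rw [hlodef]; simp only []; rw [hlo j]; simp [hz0]
  have hhi0 : ∀ j, 0 ≤ hi j := fun j => by rw [hhidef]; simp only []; rw [hhi j]; exact hz0 _
  set t : Fin n → ℝ := fun j => if hi j = lo j then 0 else (-lo j)/(hi j - lo j) with htdef
  have ht0 : ∀ j, 0 ≤ t j := by
    intro j
    rw [htdef]; simp only []
    split
    · exact le_rfl
    · next h =>
      have : 0 < hi j - lo j := by
        rcases lt_or_eq_of_le (le_trans (hlo0 j) (hhi0 j)) with h' | h'
        · linarith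
        · exact absurd h'.symm h
      exact div_nonneg (by linarith [hlo0 j]) (le_of_lt this)
  have ht1 : ∀ j, t j ≤ 1 := by
    intro j
    rw [htdef]; simp only []
    split
    · exact zero_le_one
    · next h =>
      have hpos : 0 < hi j - lo j := by
        rcases lt_or_eq_of_le (le_trans (hlo0 j) (hhi0 j)) with h' | h'
        · linarith
        · exact absurd h'.symm h
      rw [div_le_one hpos]
      linarith [hhi0 j]
  have htval : ∀ j, (1 - t j) * lo j + t j * hi j = 0 := by
    intro j
    rw [htdef]; simp only []
    split
    · next h =>
      have h0 : lo j = 0 := le_antisymm (hlo0 j) (h ▸ hhi0 j)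
      simp [h0]
    · next h =>
      have hpos : hi j - lo j ≠ 0 := sub_ne_zero.mpr h
      field_simp
      ring
  set A : Matrix (Fin m) (Fin n) ℝ := fun i j => (1 - t j) * Al i j + t j * Au i j with hAdef
  set c : Fin n → ℝ := fun j => (1 - t j) * cl j + t j * cu j with hcdef
  refine ⟨A, c, ?_, ?_, ?_, ?_, ?_⟩
  · intro i j
    have := hA i j
    have h1 := ht0 j
    have h2 := ht1 j
    rw [hAdef]; simp only []
    nlinarith
  · intro i j
    have := hA i j
    have h1 := ht0 j
    have h2 := ht1 j
    rw [hAdef]; simp only []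
    nlinarith
  · intro j
    have := hc j
    have h1 := ht0 j
    have h2 := ht1 j
    rw [hcdef]; simp only []
    nlinarith
  · intro j
    have := hc j
    have h1 := ht0 j
    have h2 := ht1 j
    rw [hcdef]; simp only []
    nlinarith
  · intro x hx
    have hcolA : ∀ j, ∑ i, Y i * A i j + lam * c j = 0 := by
      intro j
      have hsum : ∑ i, Y i * A i j = (1 - t j) * (∑ i, Y i * Al i j) + t j * (∑ i, Y i * Au i j) := by
        rw [Finset.mul_sum, Finset.mul_sum, ← Finset.sum_add_distrib]
        exact Finset.sum_congr rfl fun i _ => by rw [hAdef]; ring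
      have := htval j
      rw [hlodef, hhidef] at this
      simp only [] at this
      rw [hsum, hcdef]
      simp only []
      nlinarith [this]
    have hswap : ∑ i, Y i * (A.mulVec x) i = ∑ j, (∑ i, Y i * A i j) * x j := by
      simp only [Matrix.mulVec, dotProduct, Finset.mul_sum, Finset.sum_mul]
      rw [Finset.sum_comm]
      exact Finset.sum_congr rfl fun j _ => Finset.sum_congr rfl fun i _ => by ring
    have hkey : lam * (c ⬝ᵥ x) = -(∑ i, Y i * (A.mulVec x) i) := by
      rw [hswap]
      have : ∀ j, (∑ i, Y i * A i j) * x j = -(lam * (c j * x j)) := by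
        intro j
        have h := hcolA j
        have : ∑ i, Y i * A i j = -(lam * c j) := by linarith
        rw [this]; ring
      rw [Finset.sum_congr rfl fun j _ => this j]
      rw [Finset.sum_neg_distrib]
      rw [dotProduct, Finset.mul_sum]
      simp [mul_assoc]
    have hYAx : ∑ i, Y i * (A.mulVec x) i ≤ ∑ i, Y i * bl i :=
      Finset.sum_le_sum fun i _ => mul_le_mul_of_nonneg_left (hx i) (hY0 i)
    by_contra hcon
    push_neg at hcon
    nlinarith [mul_nonneg hlam0 (sub_nonneg.2 hcon)]

lemma mulVec_le_mulVec {m n : ℕ} {A B : Matrix (Fin m) (Fin n) ℝ} {v : Fin n → ℝ}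
    (hv : 0 ≤ v) (h : matLE A B) (i : Fin m) : A.mulVec v i ≤ B.mulVec v i := by
  simp only [Matrix.mulVec, dotProduct]
  exact Finset.sum_le_sum fun j _ => mul_le_mul_of_nonneg_right (h i j) (hv j)

lemma dot_le_dot {n : ℕ} {u v w : Fin n → ℝ} (hw : 0 ≤ w) (h : u ≤ v) :
    u ⬝ᵥ w ≤ v ⬝ᵥ w := by
  simp only [dotProduct]
  exact Finset.sum_le_sum fun j _ => mul_le_mul_of_nonneg_right (h j) (hw j)

/-- Substituting a difference of two non-negative variables for the free variables does not
change the worst optimal value of a minimization ILP. -/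
theorem worst_value_nonneg_substitution (m n : ℕ) (Al Au : Matrix (Fin m) (Fin n) ℝ)
    (bl bu : Fin m → ℝ) (cl cu : Fin n → ℝ)
    (hA : matLE Al Au) (hb : bl ≤ bu) (hc : cl ≤ cu) :
    (⨆ A : {A : Matrix (Fin m) (Fin n) ℝ // matLE Al A ∧ matLE A Au},
     ⨆ b : {b : Fin m → ℝ // bl ≤ b ∧ b ≤ bu},
     ⨆ c : {c : Fin n → ℝ // cl ≤ c ∧ c ≤ cu},
     ⨅ x : {x : Fin n → ℝ // A.1.mulVec x ≤ b.1},
       ((c.1 ⬝ᵥ x.1 : ℝ) : EReal)) =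
    (⨆ A₁ : {A : Matrix (Fin m) (Fin n) ℝ // matLE Al A ∧ matLE A Au},
     ⨆ A₂ : {A : Matrix (Fin m) (Fin n) ℝ // matLE Al A ∧ matLE A Au},
     ⨆ b : {b : Fin m → ℝ // bl ≤ b ∧ b ≤ bu},
     ⨆ c₁ : {c : Fin n → ℝ // cl ≤ c ∧ c ≤ cu},
     ⨆ c₂ : {c : Fin n → ℝ // cl ≤ c ∧ c ≤ cu},
     ⨅ p : {p : (Fin n → ℝ) × (Fin n → ℝ) //
         A₁.1.mulVec p.1 - A₂.1.mulVec p.2 ≤ b.1 ∧ 0 ≤ p.1 ∧ 0 ≤ p.2},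
       ((c₁.1 ⬝ᵥ p.1.1 - c₂.1 ⬝ᵥ p.1.2 : ℝ) : EReal)) := by
  classical
  have hAuu : matLE Au Au := fun i j => le_rfl
  have hAll : matLE Al Al := fun i j => le_rfl
  -- the value of the extremal transformed scenario
  set vstar : EReal := ⨅ p : {p : (Fin n → ℝ) × (Fin n → ℝ) //
      Au.mulVec p.1 - Al.mulVec p.2 ≤ bl ∧ 0 ≤ p.1 ∧ 0 ≤ p.2},
    ((cu ⬝ᵥ p.1.1 - cl ⬝ᵥ p.1.2 : ℝ) : EReal) with hvstar
  apply le_antisymm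
  · -- LHS ≤ vstar ≤ RHS
    refine le_trans ?_ (le_iSup_of_le ⟨Au, hA, hAuu⟩ (le_iSup_of_le ⟨Al, hAll, hA⟩
      (le_iSup_of_le ⟨bl, le_rfl, hb⟩ (le_iSup_of_le ⟨cu, hc, le_rfl⟩
        (le_iSup_of_le ⟨cl, le_rfl, hc⟩ le_rfl)))))
    refine iSup_le fun A => iSup_le fun b => iSup_le fun c => le_iInf fun p => ?_
    obtain ⟨pfeas, hp1, hp2⟩ := p.2
    refine iInf_le_of_le ⟨p.1.1 - p.1.2, ?_⟩ ?_
    · intro i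
      have e1 : A.1.mulVec (p.1.1 - p.1.2) i = A.1.mulVec p.1.1 i - A.1.mulVec p.1.2 i := by
        rw [Matrix.mulVec_sub]; rfl
      have e2 : A.1.mulVec p.1.1 i ≤ Au.mulVec p.1.1 i := mulVec_le_mulVec hp1 A.2.2 i
      have e3 : Al.mulVec p.1.2 i ≤ A.1.mulVec p.1.2 i := mulVec_le_mulVec hp2 A.2.1 i
      have e4 := pfeas i
      have e5 := b.2.1 i
      simp only [Pi.sub_apply] at e4
      rw [e1]
      linarith
    · refine EReal.coe_le_coe_iff.2 ?_
      have e1 : c.1 ⬝ᵥ (p.1.1 - p.1.2) = c.1 ⬝ᵥ p.1.1 - c.1 ⬝ᵥ p.1.2 := by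
        rw [dotProduct_sub]
      have e2 : c.1 ⬝ᵥ p.1.1 ≤ cu ⬝ᵥ p.1.1 := dot_le_dot hp1 c.2.2
      have e3 : cl ⬝ᵥ p.1.2 ≤ c.1 ⬝ᵥ p.1.2 := dot_le_dot hp2 c.2.1
      rw [e1]
      linarith
  · -- each RHS scenario ≤ vstar, and vstar ≤ LHS
    refine iSup_le fun A₁ => iSup_le fun A₂ => iSup_le fun b => iSup_le fun c₁ =>
      iSup_le fun c₂ => le_trans (b := vstar) (le_iInf fun p => ?_) ?_
    · -- scenario value ≤ vstar: every extremal-feasible p is feasible here with smaller value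
      obtain ⟨pfeas, hp1, hp2⟩ := p.2
      refine iInf_le_of_le ⟨p.1, ⟨?_, hp1, hp2⟩⟩ ?_
      · intro i
        have e2 : A₁.1.mulVec p.1.1 i ≤ Au.mulVec p.1.1 i := mulVec_le_mulVec hp1 A₁.2.2 i
        have e3 : Al.mulVec p.1.2 i ≤ A₂.1.mulVec p.1.2 i := mulVec_le_mulVec hp2 A₂.2.1 i
        have e4 := pfeas i
        have e5 := b.2.1 i
        simp only [Pi.sub_apply] at e4 ⊢
        linarith
      · refine EReal.coe_le_coe_iff.2 ?_
        have e2 : c₁.1 ⬝ᵥ p.1.1 ≤ cu ⬝ᵥ p.1.1 := dot_le_dot hp1 c₁.2.2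
        have e3 : cl ⬝ᵥ p.1.2 ≤ c₂.1 ⬝ᵥ p.1.2 := dot_le_dot hp2 c₂.2.1
        linarith
    · -- vstar ≤ LHS via Farkas
      refine EReal.ge_of_forall_gt_iff_ge.1 fun r hr => ?_
      have hinf : ¬ ∃ p : (Fin n → ℝ) × (Fin n → ℝ),
          Au.mulVec p.1 - Al.mulVec p.2 ≤ bl ∧ 0 ≤ p.1 ∧ 0 ≤ p.2 ∧
            cu ⬝ᵥ p.1 - cl ⬝ᵥ p.2 ≤ r := by
        rintro ⟨p, h1, h2, h3, h4⟩
        have hle : vstar ≤ ((cu ⬝ᵥ p.1 - cl ⬝ᵥ p.2 : ℝ) : EReal) :=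
          iInf_le _ (⟨p, h1, h2, h3⟩ : {p : (Fin n → ℝ) × (Fin n → ℝ) //
            Au.mulVec p.1 - Al.mulVec p.2 ≤ bl ∧ 0 ≤ p.1 ∧ 0 ≤ p.2})
        exact absurd (hle.trans (EReal.coe_le_coe_iff.2 h4)) (not_le.2 hr)
      obtain ⟨A, c, h1, h2, h3, h4, hval⟩ := exists_scenario m n Al Au bl cl cu hA hc r hinf
      refine le_iSup_of_le ⟨A, h1, h2⟩ (le_iSup_of_le ⟨bl, le_rfl, hb⟩
        (le_iSup_of_le ⟨c, h3, h4⟩ (le_iInf fun x => ?_)))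
      exact EReal.coe_le_coe_iff.2 (le_of_lt (hval x.1 x.2))
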